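/- Let c > 0 and let (a_n), (b_n) be sequences of positive real numbers with a_n ≥ c for all n. Suppose the sequence (log₁₀ a_n) is equidistributed mod 1 (i.e., (a_n) is Benford base 10) and that b_n − a_n → 0 as n → ∞. Then (log₁₀ b_n) is equidistributed mod 1, i.e., (b_n) is Benford base 10 as well. -/

import Mathlib

open Filter Finset Classical

/-- A sequence `x : ℕ → ℝ` is equidistributed mod 1 if for all `0 ≤ u ≤ v ≤ 1`,
the proportion of `n < N` with `Int.fract (x n) ∈ [u, v)` tends to `v - u`. -/
def EquidistributedMod1 (x : ℕ → ℝ) : Prop :=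
  ∀ u v : ℝ, 0 ≤ u → u ≤ v → v ≤ 1 →
    Tendsto (fun N : ℕ =>
        (((Finset.range N).filter (fun n => Int.fract (x n) ∈ Set.Ico u v)).card : ℝ) / (N : ℝ))
      atTop (nhds (v - u))

lemma fract_add_fract_aux (r d : ℝ) : Int.fract (Int.fract r + d) = Int.fract (r + d) := by
  have h := Int.fract_sub_intCast (r + d) ⌊r⌋
  rw [show r + d - (⌊r⌋ : ℝ) = Int.fract r + d by rw [Int.fract]; ring] at h
  exact h

lemma equi_shift (x y : ℕ → ℝ) (hx : EquidistributedMod1 x)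
    (hd : Tendsto (fun n => y n - x n) atTop (nhds 0)) :
    EquidistributedMod1 y := by
  intro u v hu huv hv1
  rw [Metric.tendsto_nhds]
  intro ε hε
  set δ : ℝ := min (ε / 9) (1 / 2) with hδdef
  have hδpos : 0 < δ := lt_min (by linarith) (by norm_num)
  have hδε : δ ≤ ε / 9 := min_le_left _ _
  have hδ2 : δ ≤ 1 / 2 := min_le_right _ _
  obtain ⟨N₀, hN₀⟩ := Metric.tendsto_atTop.mp hd δ hδpos
  have hdabs : ∀ n, N₀ ≤ n → |y n - x n| < δ := by
    intro n hn
    have := hN₀ n hn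
    rwa [Real.dist_eq, sub_zero] at this
  set u' := min (u + δ) v with hu'def
  set v' := max (v - δ) u' with hv'def
  set u₂ := max (u - δ) 0 with hu₂def
  set v₂ := min (v + δ) 1 with hv₂def
  have hu'0 : 0 ≤ u' := le_min (by linarith) (le_trans hu huv)
  have hu'v' : u' ≤ v' := le_max_right _ _
  have hv'1 : v' ≤ 1 := max_le (by linarith) (le_trans (min_le_right _ _) hv1)
  have hu₂0 : 0 ≤ u₂ := le_max_right _ _
  have hu₂v₂ : u₂ ≤ v₂ :=
    max_le (le_min (by linarith) (by linarith)) (le_min (by linarith) (by norm_num))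
  have hv₂1 : v₂ ≤ 1 := min_le_right _ _
  have hdiff1 : v - u - 2 * δ ≤ v' - u' := by
    have h1 := le_max_left (v - δ) u'
    have h2 := min_le_left (u + δ) v
    linarith
  have hdiff2 : v₂ - u₂ ≤ v - u + 2 * δ := by
    have h1 := le_max_left (u - δ) (0 : ℝ)
    have h2 := min_le_left (v + δ) (1 : ℝ)
    linarith
  have h1 := hx u₂ v₂ hu₂0 hu₂v₂ hv₂1
  have h2 := hx 0 δ le_rfl hδpos.le (by linarith)
  have h3 := hx (1 - δ) 1 (by linarith) (by linarith) le_rfl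
  have h4 := hx u' v' hu'0 hu'v' hv'1
  have h5 : Tendsto (fun N : ℕ => (N₀ : ℝ) / N) atTop (nhds 0) :=
    tendsto_const_div_atTop_nhds_zero_nat _
  have ev1 := (Metric.tendsto_nhds.mp h1 δ hδpos).mono
    (fun N h => by rwa [Real.dist_eq] at h)
  have ev2 := (Metric.tendsto_nhds.mp h2 δ hδpos).mono
    (fun N h => by rwa [Real.dist_eq] at h)
  have ev3 := (Metric.tendsto_nhds.mp h3 δ hδpos).mono
    (fun N h => by rwa [Real.dist_eq] at h)
  have ev4 := (Metric.tendsto_nhds.mp h4 δ hδpos).mono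
    (fun N h => by rwa [Real.dist_eq] at h)
  have ev5 := (Metric.tendsto_nhds.mp h5 δ hδpos).mono
    (fun N h => by rwa [Real.dist_eq] at h)
  filter_upwards [ev1, ev2, ev3, ev4, ev5, eventually_ge_atTop 1] with N b1 b2 b3 b4 b5 hN1
  have hNpos : (0 : ℝ) < N := by exact_mod_cast hN1
  -- the lower-bound inclusion
  have inclL : (range N).filter (fun n => Int.fract (x n) ∈ Set.Ico u' v') ⊆
      ((range N).filter (fun n => Int.fract (y n) ∈ Set.Ico u v)) ∪ range N₀ := by
    intro n hn
    rw [mem_filter, Set.mem_Ico] at hn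
    obtain ⟨hnN, hx1, hx2⟩ := hn
    by_cases hn0 : n < N₀
    · exact mem_union_right _ (mem_range.mpr hn0)
    · push_neg at hn0
      refine mem_union_left _ (mem_filter.mpr ⟨hnN, ?_⟩)
      obtain ⟨hd1, hd2⟩ := abs_lt.mp (hdabs n hn0)
      have huv' : u' < v' := lt_of_le_of_lt hx1 hx2
      have hA : u + δ ≤ v := by
        by_contra h
        push_neg at h
        rw [hu'def, min_eq_right h.le] at huv' hv'def
        rw [hv'def, max_eq_right (by linarith)] at huv'
        exact lt_irrefl _ huv'
      have hu'eq : u' = u + δ := min_eq_left hA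
      have hv'le : u' ≤ v - δ := by
        by_contra h
        push_neg at h
        rw [hv'def, max_eq_right h.le] at huv'
        exact lt_irrefl _ huv'
      have hv'eq : v' = v - δ := max_eq_left hv'le
      rw [hu'eq] at hx1
      rw [hv'eq] at hx2
      have key : Int.fract (y n) = Int.fract (x n) + (y n - x n) := by
        have h := fract_add_fract_aux (x n) (y n - x n)
        rw [show x n + (y n - x n) = y n by ring] at h
        rw [← h]
        exact Int.fract_eq_self.mpr ⟨by linarith, by linarith⟩
      rw [key, Set.mem_Ico]
      constructor <;> linarith
  -- the upper-bound inclusion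
  have inclU : (range N).filter (fun n => Int.fract (y n) ∈ Set.Ico u v) ⊆
      range N₀ ∪ ((range N).filter (fun n => Int.fract (x n) ∈ Set.Ico u₂ v₂) ∪
        ((range N).filter (fun n => Int.fract (x n) ∈ Set.Ico 0 δ) ∪
          (range N).filter (fun n => Int.fract (x n) ∈ Set.Ico (1 - δ) 1))) := by
    intro n hn
    rw [mem_filter, Set.mem_Ico] at hn
    obtain ⟨hnN, hy1, hy2⟩ := hn
    by_cases hn0 : n < N₀
    · exact mem_union_left _ (mem_range.mpr hn0)
    · push_neg at hn0
      refine mem_union_right _ ?_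
      obtain ⟨hd1, hd2⟩ := abs_lt.mp (hdabs n hn0)
      set t : ℝ := Int.fract (y n) - (y n - x n) with htdef
      have hkey : Int.fract t = Int.fract (x n) := by
        have h := fract_add_fract_aux (y n) (-(y n - x n))
        rw [← sub_eq_add_neg, ← sub_eq_add_neg,
          show y n - (y n - x n) = x n by ring] at h
        exact h
      have ht1 : u - δ < t := by rw [htdef]; linarith
      have ht2 : t < v + δ := by rw [htdef]; linarith
      have ht3 : -δ < t := by rw [htdef]; linarith
      have ht4 : t < 1 + δ := by rw [htdef]; linarith
      rcases lt_or_ge t 0 with hc1 | hc1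
      · -- wrap around below : fract x ∈ [1 - δ, 1)
        refine mem_union_right _ (mem_union_right _ (mem_filter.mpr ⟨hnN, ?_⟩))
        have : Int.fract t = t + 1 := by
          rw [← Int.fract_add_intCast t 1]
          push_cast
          exact Int.fract_eq_self.mpr ⟨by linarith, by linarith⟩
        rw [← hkey, this, Set.mem_Ico]
        constructor <;> linarith
      · rcases lt_or_ge t 1 with hc2 | hc2
        · -- no wrap : fract x ∈ [u₂, v₂)
          refine mem_union_left _ (mem_filter.mpr ⟨hnN, ?_⟩)
          have : Int.fract t = t := Int.fract_eq_self.mpr ⟨hc1, hc2⟩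
          rw [← hkey, this, Set.mem_Ico]
          refine ⟨max_le (by linarith) hc1, lt_min (by linarith) hc2⟩
        · -- wrap around above : fract x ∈ [0, δ)
          refine mem_union_right _ (mem_union_left _ (mem_filter.mpr ⟨hnN, ?_⟩))
          have : Int.fract t = t - 1 := by
            rw [← Int.fract_sub_intCast t 1]
            push_cast
            exact Int.fract_eq_self.mpr ⟨by linarith, by linarith⟩
          rw [← hkey, this, Set.mem_Ico]
          constructor <;> linarith
  -- turn the inclusions into real inequalities
  set cY : ℕ := ((range N).filter (fun n => Int.fract (y n) ∈ Set.Ico u v)).card with hcY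
  set c1 : ℕ := ((range N).filter (fun n => Int.fract (x n) ∈ Set.Ico u₂ v₂)).card with hc1
  set c2 : ℕ := ((range N).filter (fun n => Int.fract (x n) ∈ Set.Ico 0 δ)).card with hc2
  set c3 : ℕ := ((range N).filter (fun n => Int.fract (x n) ∈ Set.Ico (1 - δ) 1)).card with hc3
  set c4 : ℕ := ((range N).filter (fun n => Int.fract (x n) ∈ Set.Ico u' v')).card with hc4
  have hL : (c4 : ℝ) ≤ (cY : ℝ) + (N₀ : ℝ) := by
    have := le_trans (card_le_card inclL) (card_union_le _ _)
    rw [card_range] at this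
    exact_mod_cast this
  have hU : (cY : ℝ) ≤ (N₀ : ℝ) + ((c1 : ℝ) + ((c2 : ℝ) + (c3 : ℝ))) := by
    have h := card_le_card inclU
    have h2 := le_trans h (le_trans (card_union_le _ _)
      (add_le_add_right (le_trans (card_union_le _ _)
        (add_le_add_right (card_union_le _ _) _)) _))
    rw [card_range] at h2
    exact_mod_cast h2
  -- finish numerically
  rw [Real.dist_eq, abs_lt]
  obtain ⟨b1a, b1b⟩ := abs_lt.mp b1
  obtain ⟨b2a, b2b⟩ := abs_lt.mp b2
  obtain ⟨b3a, b3b⟩ := abs_lt.mp b3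
  obtain ⟨b4a, b4b⟩ := abs_lt.mp b4
  obtain ⟨b5a, b5b⟩ := abs_lt.mp b5
  have hLdiv : (c4 : ℝ) / N ≤ (cY : ℝ) / N + (N₀ : ℝ) / N := by
    rw [← add_div]
    exact div_le_div_of_nonneg_right hL hNpos.le
  have hUdiv : (cY : ℝ) / N ≤ (N₀ : ℝ) / N + ((c1 : ℝ) / N + ((c2 : ℝ) / N + (c3 : ℝ) / N)) := by
    rw [← add_div, ← add_div, ← add_div]
    exact div_le_div_of_nonneg_right hU hNpos.le
  constructor
  · -- lower bound
    linarith
  · -- upper bound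
    linarith

/-- If `(a n)` is Benford base 10, bounded below by `c > 0`, and `b n - a n → 0`,
then `(b n)` is Benford base 10. -/
theorem benford_of_tendsto_sub_zero (c : ℝ) (hc : 0 < c) (a b : ℕ → ℝ)
    (ha : ∀ n, 0 < a n) (hb : ∀ n, 0 < b n) (hca : ∀ n, c ≤ a n)
    (hben : EquidistributedMod1 (fun n => Real.logb 10 (a n)))
    (hlim : Tendsto (fun n => b n - a n) atTop (nhds 0)) :
    EquidistributedMod1 (fun n => Real.logb 10 (b n)) := by
  apply equi_shift (fun n => Real.logb 10 (a n)) _ hben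
  have hratio : Tendsto (fun n => b n / a n) atTop (nhds 1) := by
    have h0 : Tendsto (fun n => (b n - a n) / a n) atTop (nhds 0) := by
      have hg : Tendsto (fun n => |b n - a n| / c) atTop (nhds 0) := by
        have := (hlim.abs).div_const c
        simpa using this
      refine squeeze_zero_norm (fun n => ?_) hg
      rw [Real.norm_eq_abs, abs_div, abs_of_pos (ha n)]
      gcongr
      exact hca n
    have : Tendsto (fun n => (b n - a n) / a n + 1) atTop (nhds (0 + 1)) :=
      h0.add tendsto_const_nhds
    rw [zero_add] at this
    refine this.congr (fun n => ?_)
    rw [eq_div_iff (ha n).ne', add_mul, div_mul_cancel₀ _ (ha n).ne', one_mul, sub_add_cancel]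
  have hlog : Tendsto (fun n => Real.logb 10 (b n / a n)) atTop (nhds 0) := by
    have hc1 : ContinuousAt (Real.logb 10) 1 :=
      Real.continuousAt_logb (by norm_num)
    have h2 := hc1.tendsto.comp hratio
    simp only [Function.comp_def] at h2
    rwa [Real.logb_one] at h2
  refine hlog.congr (fun n => ?_)
  rw [Real.logb_div (hb n).ne' (ha n).ne']
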